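/- Let H be an involutory Hopf algebra over a field k with μ(x⊗y⊗z) = x·S(y)·z. Then μ is categorically ternary self-distributive: for all x₁,...,x₅ ∈ H (with Sweedler notation for iterated comultiplication applied to x₄, x₅), μ(μ(x₁⊗x₄⁽¹²⁾⊗x₅⁽¹²⁾) ⊗ μ(x₂⊗x₄⁽¹¹⁾⊗x₅⁽¹¹⁾) ⊗ μ(x₃⊗x₄⁽²⁾⊗x₅⁽²⁾)) = μ(μ(x₁⊗x₂⊗x₃)⊗x₄⊗x₅). -/

import Mathlib

open Coalgebra HopfAlgebra

section Aux
open Coalgebra HopfAlgebra TensorProduct LinearMap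

variable {k : Type*} [CommSemiring k] {H : Type*} [Semiring H] [HopfAlgebra k H]

noncomputable def mulRepr {a b : H} {ι κ : Type*} (r : Coalgebra.Repr k a ι)
    (s : Coalgebra.Repr k b κ) :
    Coalgebra.Repr k (a * b) (ι × κ) where
  index := r.index ×ˢ s.index
  left := fun p => r.left p.1 * s.left p.2
  right := fun p => r.right p.1 * s.right p.2
  eq := by
    rw [Bialgebra.comul_mul, ← r.eq, ← s.eq, Finset.sum_mul_sum]
    rw [Finset.sum_product]
    simp [Algebra.TensorProduct.tmul_mul_tmul]

lemma sum_counit_left_smul {a : H} {ι : Type*} (r : Coalgebra.Repr k a ι) {M : Type*} [AddCommMonoid M]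
    [Module k M] (f : H →ₗ[k] M) :
    ∑ i ∈ r.index, counit (R := k) (r.left i) • f (r.right i) = f a := by
  have h2 := congrArg (TensorProduct.lid k M)
    (Coalgebra.sum_counit_tmul_map_eq (R := k) f a (repr := r))
  rw [map_sum] at h2
  simp only [TensorProduct.lid_tmul, one_smul] at h2
  exact h2

lemma sum_counit_right_smul {a : H} {ι : Type*} (r : Coalgebra.Repr k a ι) {M : Type*} [AddCommMonoid M]
    [Module k M] (f : H →ₗ[k] M) :
    ∑ i ∈ r.index, counit (R := k) (r.right i) • f (r.left i) = f a := by
  have h2 := congrArg (TensorProduct.rid k M)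
    (Coalgebra.sum_map_tmul_counit_eq (R := k) f a (repr := r))
  rw [map_sum] at h2
  simp only [TensorProduct.rid_tmul, one_smul] at h2
  exact h2

lemma antipode_one' : antipode (R := k) (1 : H) = 1 := by
  have h := mul_antipode_rTensor_comul_apply (R := k) (A := H) (1 : H)
  simpa [Algebra.TensorProduct.one_def] using h

lemma sum_mul_mul_right {ι : Type*} {c : k} (t : Finset ι) (f g : ι → H) (K : H)
    (h : ∑ i ∈ t, f i * g i = c • 1) :
    ∑ i ∈ t, f i * (g i * K) = c • K := by
  calc ∑ i ∈ t, f i * (g i * K) = (∑ i ∈ t, f i * g i) * K := by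
        rw [Finset.sum_mul]; exact Finset.sum_congr rfl fun i _ => (mul_assoc _ _ _).symm
  _ = (c • 1) * K := by rw [h]
  _ = c • K := by rw [smul_mul_assoc, one_mul]

lemma sum_mul_mul_sandwich {ι : Type*} {c : k} (t : Finset ι) (f g : ι → H) (L K : H)
    (h : ∑ i ∈ t, f i * g i = c • 1) :
    ∑ i ∈ t, L * (f i * (g i * K)) = c • (L * K) := by
  rw [← Finset.mul_sum, sum_mul_mul_right t f g K h, mul_smul_comm]

lemma sum_rot3 {α β γ M : Type*} [AddCommMonoid M] (s : Finset α) (t : Finset β)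
    (u : β → Finset γ) (f : α → β → γ → M) :
    ∑ x ∈ s, ∑ y ∈ t, ∑ z ∈ u y, f x y z = ∑ y ∈ t, ∑ z ∈ u y, ∑ x ∈ s, f x y z := by
  rw [Finset.sum_comm]
  exact Finset.sum_congr rfl fun y _ => Finset.sum_comm

set_option maxHeartbeats 1000000 in
lemma antipode_mul_aux (a b : H) {ι κ : Type*} {ιl ιr : ι → Type*} {κl κr : κ → Type*}
    (r : Coalgebra.Repr k a ι) (rl : ∀ i, Coalgebra.Repr k (r.left i) (ιl i))
    (rr : ∀ i, Coalgebra.Repr k (r.right i) (ιr i))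
    (s : Coalgebra.Repr k b κ) (sl : ∀ j, Coalgebra.Repr k (s.left j) (κl j))
    (sr : ∀ j, Coalgebra.Repr k (s.right j) (κr j)) :
    antipode (R := k) (a * b) = antipode (R := k) b * antipode (R := k) a := by
  set S : H →ₗ[k] H := antipode (R := k) with hS
  have hA : ∀ (F : H ⊗[k] (H ⊗[k] H) →ₗ[k] H),
      ∑ i ∈ r.index, ∑ p ∈ (rl i).index,
        F ((rl i).left p ⊗ₜ[k] ((rl i).right p ⊗ₜ[k] r.right i))
      = ∑ i ∈ r.index, ∑ p ∈ (rr i).index,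
        F (r.left i ⊗ₜ[k] ((rr i).left p ⊗ₜ[k] (rr i).right p)) := by
    intro F
    simpa [map_sum] using congrArg F (Coalgebra.sum_tmul_tmul_eq r rl rr)
  have hB : ∀ (F : H ⊗[k] (H ⊗[k] H) →ₗ[k] H),
      ∑ j ∈ s.index, ∑ q ∈ (sl j).index,
        F ((sl j).left q ⊗ₜ[k] ((sl j).right q ⊗ₜ[k] s.right j))
      = ∑ j ∈ s.index, ∑ q ∈ (sr j).index,
        F (s.left j ⊗ₜ[k] ((sr j).left q ⊗ₜ[k] (sr j).right q)) := by
    intro F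
    simpa [map_sum] using congrArg F (Coalgebra.sum_tmul_tmul_eq s sl sr)
  set F : H → H → H → (H ⊗[k] (H ⊗[k] H) →ₗ[k] H) := fun b1 b2 b3 =>
    mulLeft k (S b1) ∘ₗ mul' k H ∘ₗ
      map S (mul' k H ∘ₗ map (mulRight k b2) (S ∘ₗ mulRight k b3)) with hF
  have hFe : ∀ b1 b2 b3 a1 a2 a3 : H, F b1 b2 b3 (a1 ⊗ₜ[k] (a2 ⊗ₜ[k] a3))
      = S b1 * (S a1 * ((a2 * b2) * S (a3 * b3))) := by
    intros; simp [hF]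
  set G : H → H → H → (H ⊗[k] (H ⊗[k] H) →ₗ[k] H) := fun a1 a2 a3 =>
    mul' k H ∘ₗ map (mulRight k (S a1) ∘ₗ S)
      (mul' k H ∘ₗ map (mulLeft k a2) (S ∘ₗ mulLeft k a3)) with hG
  have hGe : ∀ a1 a2 a3 b1 b2 b3 : H, G a1 a2 a3 (b1 ⊗ₜ[k] (b2 ⊗ₜ[k] b3))
      = (S b1 * S a1) * ((a2 * b2) * S (a3 * b3)) := by
    intros; simp [hG]
  -- step 1 : X1 = X2
  have step1 := hA (∑ j ∈ s.index, ∑ q ∈ (sl j).index,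
      F ((sl j).left q) ((sl j).right q) (s.right j))
  simp only [LinearMap.sum_apply, hFe] at step1
  -- step 2 : X2 = X3
  have step2 :
      (∑ i ∈ r.index, ∑ p ∈ (rr i).index, ∑ j ∈ s.index, ∑ q ∈ (sl j).index,
        S ((sl j).left q) * (S (r.left i) *
          (((rr i).left p * (sl j).right q) * S ((rr i).right p * s.right j))))
      = ∑ i ∈ r.index, ∑ p ∈ (rr i).index, ∑ j ∈ s.index, ∑ q ∈ (sr j).index,
        (S (s.left j) * S (r.left i)) *
          (((rr i).left p * (sr j).left q) * S ((rr i).right p * (sr j).right q)) := by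
    refine Finset.sum_congr rfl fun i _ => Finset.sum_congr rfl fun p _ => ?_
    have h := hB (G (r.left i) ((rr i).left p) ((rr i).right p))
    simp only [hGe] at h
    rw [← h]
    exact Finset.sum_congr rfl fun j _ => Finset.sum_congr rfl fun q _ =>
      (mul_assoc _ _ _).symm
  -- claim 2 : X1 = S (a * b)
  have claim2 :
      (∑ i ∈ r.index, ∑ p ∈ (rl i).index, ∑ j ∈ s.index, ∑ q ∈ (sl j).index,
        S ((sl j).left q) * (S ((rl i).left p) *
          (((rl i).right p * (sl j).right q) * S (r.right i * s.right j))))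
      = S (a * b) := by
    set Φ : H →ₗ[k] H := ∑ j ∈ s.index, ∑ q ∈ (sl j).index,
      (mulLeft k (S ((sl j).left q)) ∘ₗ mulLeft k ((sl j).right q) ∘ₗ S
        ∘ₗ mulRight k (s.right j)) with hΦdef
    have hΦ : ∀ x : H, Φ x = ∑ j ∈ s.index, ∑ q ∈ (sl j).index,
        S ((sl j).left q) * ((sl j).right q * S (x * s.right j)) := by
      intro x; simp [hΦdef, LinearMap.sum_apply]
    calc
      (∑ i ∈ r.index, ∑ p ∈ (rl i).index, ∑ j ∈ s.index, ∑ q ∈ (sl j).index,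
        S ((sl j).left q) * (S ((rl i).left p) *
          (((rl i).right p * (sl j).right q) * S (r.right i * s.right j))))
        = ∑ i ∈ r.index, ∑ j ∈ s.index, ∑ q ∈ (sl j).index, ∑ p ∈ (rl i).index,
            S ((sl j).left q) * (S ((rl i).left p) *
              (((rl i).right p * (sl j).right q) * S (r.right i * s.right j))) :=
        Finset.sum_congr rfl fun i _ => by
          rw [Finset.sum_comm]
          exact Finset.sum_congr rfl fun j _ => Finset.sum_comm
      _ = ∑ i ∈ r.index, ∑ j ∈ s.index, ∑ q ∈ (sl j).index,
            counit (R := k) (r.left i) •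
              (S ((sl j).left q) * ((sl j).right q * S (r.right i * s.right j))) := by
        refine Finset.sum_congr rfl fun i _ => Finset.sum_congr rfl fun j _ =>
          Finset.sum_congr rfl fun q _ => ?_
        have h := sum_mul_mul_sandwich ((rl i).index) (fun p => S ((rl i).left p))
          (fun p => (rl i).right p) (S ((sl j).left q))
          ((sl j).right q * S (r.right i * s.right j))
          (sum_antipode_mul_eq_smul (R := k) (rl i))
        simpa [mul_assoc] using h
      _ = ∑ i ∈ r.index, counit (R := k) (r.left i) • Φ (r.right i) := by
        refine Finset.sum_congr rfl fun i _ => ?_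
        rw [hΦ, Finset.smul_sum]
        exact Finset.sum_congr rfl fun j _ => (Finset.smul_sum).symm
      _ = Φ a := sum_counit_left_smul r Φ
      _ = ∑ j ∈ s.index, ∑ q ∈ (sl j).index,
            S ((sl j).left q) * ((sl j).right q * S (a * s.right j)) := hΦ a
      _ = ∑ j ∈ s.index, counit (R := k) (s.left j) • S (a * s.right j) :=
        Finset.sum_congr rfl fun j _ =>
          sum_mul_mul_right ((sl j).index) (fun q => S ((sl j).left q))
            (fun q => (sl j).right q) (S (a * s.right j))
            (sum_antipode_mul_eq_smul (R := k) (sl j))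
      _ = (S ∘ₗ mulLeft k a) b := sum_counit_left_smul s (S ∘ₗ mulLeft k a)
      _ = S (a * b) := by simp
  -- claim 3 : X3 = S b * S a
  have claim3 :
      (∑ i ∈ r.index, ∑ p ∈ (rr i).index, ∑ j ∈ s.index, ∑ q ∈ (sr j).index,
        (S (s.left j) * S (r.left i)) *
          (((rr i).left p * (sr j).left q) * S ((rr i).right p * (sr j).right q)))
      = S b * S a := by
    calc
      (∑ i ∈ r.index, ∑ p ∈ (rr i).index, ∑ j ∈ s.index, ∑ q ∈ (sr j).index,
        (S (s.left j) * S (r.left i)) *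
          (((rr i).left p * (sr j).left q) * S ((rr i).right p * (sr j).right q)))
        = ∑ i ∈ r.index, ∑ j ∈ s.index, ∑ p ∈ (rr i).index, ∑ q ∈ (sr j).index,
            (S (s.left j) * S (r.left i)) *
              (((rr i).left p * (sr j).left q) * S ((rr i).right p * (sr j).right q)) :=
        Finset.sum_congr rfl fun i _ => Finset.sum_comm
      _ = ∑ i ∈ r.index, ∑ j ∈ s.index,
            counit (R := k) (r.right i) • counit (R := k) (s.right j) •
              (S (s.left j) * S (r.left i)) := by
        refine Finset.sum_congr rfl fun i _ => Finset.sum_congr rfl fun j _ => ?_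
        have hpq := sum_mul_antipode_eq_smul (R := k) (mulRepr (rr i) (sr j))
        dsimp only [mulRepr] at hpq
        rw [Finset.sum_product] at hpq
        dsimp only at hpq
        rw [← hS] at hpq
        calc ∑ p ∈ (rr i).index, ∑ q ∈ (sr j).index,
              (S (s.left j) * S (r.left i)) *
                (((rr i).left p * (sr j).left q) * S ((rr i).right p * (sr j).right q))
            = (S (s.left j) * S (r.left i)) * ∑ p ∈ (rr i).index, ∑ q ∈ (sr j).index,
                ((rr i).left p * (sr j).left q) * S ((rr i).right p * (sr j).right q) := by
              simp only [Finset.mul_sum]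
          _ = (S (s.left j) * S (r.left i)) *
                (counit (R := k) (r.right i * s.right j) • (1 : H)) := by rw [hpq]
          _ = counit (R := k) (r.right i) • counit (R := k) (s.right j) •
                (S (s.left j) * S (r.left i)) := by
              rw [Bialgebra.counit_mul, mul_smul_comm, mul_one, mul_smul]
      _ = ∑ i ∈ r.index, counit (R := k) (r.right i) •
            ((mulRight k (S (r.left i)) ∘ₗ S) b) := by
        refine Finset.sum_congr rfl fun i _ => ?_
        rw [← Finset.smul_sum]
        congr 1
        exact sum_counit_right_smul s (mulRight k (S (r.left i)) ∘ₗ S)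
      _ = (mulLeft k (S b) ∘ₗ S) a := by
        rw [← sum_counit_right_smul r (mulLeft k (S b) ∘ₗ S)]
        exact Finset.sum_congr rfl fun i _ => by simp
      _ = S b * S a := by simp
  rw [← claim2, step1, step2, claim3]

lemma antipode_mul' (a b : H) :
    antipode (R := k) (a * b) = antipode (R := k) b * antipode (R := k) a :=
  antipode_mul_aux a b (ℛ k a) (fun i => ℛ k _) (fun i => ℛ k _)
    (ℛ k b) (fun j => ℛ k _) (fun j => ℛ k _)

lemma sum_right_mul_antipode_left
    (hS2 : ∀ x : H, antipode (R := k) (antipode (R := k) x) = x)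
    {a : H} {ι : Type*} (r : Coalgebra.Repr k a ι) :
    ∑ i ∈ r.index, r.right i * antipode (R := k) (r.left i)
      = counit (R := k) a • (1 : H) := by
  calc ∑ i ∈ r.index, r.right i * antipode (R := k) (r.left i)
      = ∑ i ∈ r.index, antipode (R := k) (r.left i * antipode (R := k) (r.right i)) := by
        refine Finset.sum_congr rfl fun i _ => ?_
        rw [antipode_mul', hS2]
    _ = antipode (R := k) (∑ i ∈ r.index, r.left i * antipode (R := k) (r.right i)) :=
        (map_sum _ _ _).symm
    _ = counit (R := k) a • (1 : H) := by
        rw [sum_mul_antipode_eq_smul, map_smul, antipode_one']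

lemma sum_antipode_right_mul_left
    (hS2 : ∀ x : H, antipode (R := k) (antipode (R := k) x) = x)
    {a : H} {ι : Type*} (r : Coalgebra.Repr k a ι) :
    ∑ i ∈ r.index, antipode (R := k) (r.right i) * r.left i
      = counit (R := k) a • (1 : H) := by
  calc ∑ i ∈ r.index, antipode (R := k) (r.right i) * r.left i
      = ∑ i ∈ r.index, antipode (R := k) (antipode (R := k) (r.left i) * r.right i) := by
        refine Finset.sum_congr rfl fun i _ => ?_
        rw [antipode_mul', hS2]
    _ = antipode (R := k) (∑ i ∈ r.index, antipode (R := k) (r.left i) * r.right i) :=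
        (map_sum _ _ _).symm
    _ = counit (R := k) a • (1 : H) := by
        rw [sum_antipode_mul_eq_smul, map_smul, antipode_one']

end Aux

open Coalgebra HopfAlgebra LinearMap in
/-- For an involutory Hopf algebra `H` over a field `k`, the operation
`μ(x ⊗ y ⊗ z) = x · S(y) · z` is categorically ternary self-distributive:
`μ(μ(x₁⊗x₄⁽¹²⁾⊗x₅⁽¹²⁾) ⊗ μ(x₂⊗x₄⁽¹¹⁾⊗x₅⁽¹¹⁾) ⊗ μ(x₃⊗x₄⁽²⁾⊗x₅⁽²⁾))
  = μ(μ(x₁⊗x₂⊗x₃)⊗x₄⊗x₅)`,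
where the Sweedler components of `x₄` and `x₅` are expressed via arbitrary
representations of the (iterated) comultiplication. -/
theorem involutory_hopf_tsd (k : Type*) [Field k] (H : Type*)
    [Ring H] [HopfAlgebra k H]
    (hS : ∀ a : H, antipode (R := k) (antipode (R := k) a) = a) :
    let μ : H → H → H → H := fun x y z => x * antipode (R := k) y * z
    ∀ x₁ x₂ x₃ x₄ x₅ : H,
    ∀ ι₄ : Type _, ∀ r₄ : Coalgebra.Repr k x₄ ι₄, ∀ ι₅ : Type _, ∀ r₅ : Coalgebra.Repr k x₅ ι₅,
    ∀ κ₄ : ι₄ → Type _, ∀ r₄l : (i : ι₄) → Coalgebra.Repr k (r₄.left i) (κ₄ i),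
    ∀ κ₅ : ι₅ → Type _, ∀ r₅l : (j : ι₅) → Coalgebra.Repr k (r₅.left j) (κ₅ j),
      ∑ i ∈ r₄.index, ∑ j ∈ r₅.index, ∑ a ∈ (r₄l i).index, ∑ b ∈ (r₅l j).index,
        μ (μ x₁ ((r₄l i).right a) ((r₅l j).right b))
          (μ x₂ ((r₄l i).left a) ((r₅l j).left b))
          (μ x₃ (r₄.right i) (r₅.right j))
      = μ (μ x₁ x₂ x₃) x₄ x₅ := by
  intro μ x₁ x₂ x₃ x₄ x₅ ι₄ r₄ ι₅ r₅ κ₄ r₄l κ₅ r₅l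
  simp only [μ, antipode_mul', hS, mul_assoc]
  calc
    ∑ i ∈ r₄.index, ∑ j ∈ r₅.index, ∑ a ∈ (r₄l i).index, ∑ b ∈ (r₅l j).index,
        x₁ * (antipode (R := k) ((r₄l i).right a) * ((r₅l j).right b *
          (antipode (R := k) ((r₅l j).left b) * ((r₄l i).left a *
            (antipode (R := k) x₂ * (x₃ *
              (antipode (R := k) (r₄.right i) * r₅.right j)))))))
      = ∑ i ∈ r₄.index, ∑ j ∈ r₅.index, ∑ a ∈ (r₄l i).index,
          counit (R := k) (r₅.left j) •
            (x₁ * (antipode (R := k) ((r₄l i).right a) * ((r₄l i).left a *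
              (antipode (R := k) x₂ * (x₃ *
                (antipode (R := k) (r₄.right i) * r₅.right j)))))) := by
        refine Finset.sum_congr rfl fun i _ => Finset.sum_congr rfl fun j _ =>
          Finset.sum_congr rfl fun a _ => ?_
        rw [← Finset.mul_sum, ← Finset.mul_sum,
          sum_mul_mul_right _ _ _ _ (sum_right_mul_antipode_left hS (r₅l j)),
          mul_smul_comm, mul_smul_comm]
    _ = ∑ i ∈ r₄.index, ∑ j ∈ r₅.index,
          counit (R := k) (r₅.left j) • counit (R := k) (r₄.left i) •
            (x₁ * (antipode (R := k) x₂ * (x₃ *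
              (antipode (R := k) (r₄.right i) * r₅.right j)))) := by
        refine Finset.sum_congr rfl fun i _ => Finset.sum_congr rfl fun j _ => ?_
        rw [← Finset.smul_sum, ← Finset.mul_sum,
          sum_mul_mul_right _ _ _ _ (sum_antipode_right_mul_left hS (r₄l i)),
          mul_smul_comm]
    _ = ∑ i ∈ r₄.index,
          counit (R := k) (r₄.left i) •
            (x₁ * (antipode (R := k) x₂ * (x₃ *
              (antipode (R := k) (r₄.right i) * x₅)))) := by
        refine Finset.sum_congr rfl fun i _ => ?_
        calc ∑ j ∈ r₅.index, counit (R := k) (r₅.left j) • counit (R := k) (r₄.left i) •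
              (x₁ * (antipode (R := k) x₂ * (x₃ *
                (antipode (R := k) (r₄.right i) * r₅.right j))))
            = counit (R := k) (r₄.left i) • ∑ j ∈ r₅.index, counit (R := k) (r₅.left j) •
                (x₁ * (antipode (R := k) x₂ * (x₃ *
                  (antipode (R := k) (r₄.right i) * r₅.right j)))) := by
              rw [Finset.smul_sum]
              exact Finset.sum_congr rfl fun j _ => smul_comm _ _ _
          _ = counit (R := k) (r₄.left i) •
                (x₁ * (antipode (R := k) x₂ * (x₃ *
                  (antipode (R := k) (r₄.right i) * x₅)))) := by
              congr 1
              have h := sum_counit_left_smul r₅ (mulLeft k x₁ ∘ₗ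
                mulLeft k (antipode (R := k) x₂) ∘ₗ mulLeft k x₃ ∘ₗ
                mulLeft k (antipode (R := k) (r₄.right i)))
              simpa using h
    _ = x₁ * (antipode (R := k) x₂ * (x₃ * (antipode (R := k) x₄ * x₅))) := by
        have h := sum_counit_left_smul r₄ (mulLeft k x₁ ∘ₗ
          mulLeft k (antipode (R := k) x₂) ∘ₗ mulLeft k x₃ ∘ₗ
          mulRight k x₅ ∘ₗ antipode (R := k))
        simpa using h
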